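/- Let A be an n×m matrix with entries in {0,...,p-1}, and let X_1,...,X_s be row transpositions such that r(X_1 X_2 ⋯ X_s A) < r(X_2 ⋯ X_s A) < ⋯ < r(X_s A) < r(A) lexicographically. Then c(X_1 X_2 ⋯ X_s A) < c(A) lexicographically. -/

import Mathlib

def rowCode (p n m : ℕ) (A : Fin n → Fin m → Fin p) : Fin n → ℕ :=
  fun i => ∑ j : Fin m, (A i j : ℕ) * p ^ (m - 1 - (j : ℕ))

def colCode (p n m : ℕ) (A : Fin n → Fin m → Fin p) : Fin m → ℕ :=
  fun j => ∑ i : Fin n, (A i j : ℕ) * p ^ (n - 1 - (i : ℕ))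

def MatEquiv (p n m : ℕ) (A B : Fin n → Fin m → Fin p) : Prop :=
  ∃ (σ : Equiv.Perm (Fin n)) (τ : Equiv.Perm (Fin m)), ∀ i j, A i j = B (σ i) (τ j)

def Canonical (p n m : ℕ) (A : Fin n → Fin m → Fin p) : Prop :=
  ∀ B : Fin n → Fin m → Fin p, MatEquiv p n m B A →
    toLex (rowCode p n m A) ≤ toLex (rowCode p n m B)

def SemiCanonical (p n m : ℕ) (A : Fin n → Fin m → Fin p) : Prop :=
  Monotone (rowCode p n m A) ∧ Monotone (colCode p n m A)


lemma sum_lt_pow (p : ℕ) (hp : 1 ≤ p) (g : ℕ → ℕ) (hg : ∀ k, g k < p) (t : ℕ) :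
    ∑ k ∈ Finset.range t, g k * p ^ k < p ^ t := by
  induction t with
  | zero => simpa using hp
  | succ t ih =>
    rw [Finset.sum_range_succ, pow_succ]
    have h1 := hg t
    calc ∑ k ∈ Finset.range t, g k * p ^ k + g t * p ^ t
        < p ^ t + g t * p ^ t := by omega
      _ = (1 + g t) * p ^ t := by ring
      _ ≤ p * p ^ t := Nat.mul_le_mul_right _ (by omega)
      _ = p ^ t * p := Nat.mul_comm _ _

lemma tail_lt {p m : ℕ} (hp : 1 ≤ p) (f : Fin m → Fin p) (j0 : Fin m) :
    ∑ j ∈ Finset.Ioi j0, (f j : ℕ) * p ^ (m - 1 - (j : ℕ)) < p ^ (m - 1 - (j0 : ℕ)) := by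
  classical
  set g : ℕ → ℕ := fun k => if h : m - 1 - k < m then (f ⟨m - 1 - k, h⟩ : ℕ) else 0 with hg
  have hglt : ∀ k, g k < p := by
    intro k
    by_cases h : m - 1 - k < m
    · simp only [hg, dif_pos h]; exact (f ⟨m - 1 - k, h⟩).isLt
    · simp only [hg, dif_neg h]; omega
  have key : ∑ j ∈ Finset.Ioi j0, (f j : ℕ) * p ^ (m - 1 - (j : ℕ))
      = ∑ k ∈ Finset.range (m - 1 - (j0 : ℕ)), g k * p ^ k := by
    refine Finset.sum_bij' (fun j _ => m - 1 - (j : ℕ))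
      (fun k hk => ⟨m - 1 - k, ?_⟩) ?_ ?_ ?_ ?_ ?_
    · have := j0.isLt; omega
    · intro j hj
      have hj' : j0 < j := Finset.mem_Ioi.mp hj
      have := j.isLt; have := j0.isLt
      have hj'' : (j0 : ℕ) < (j : ℕ) := hj'
      simp only [Finset.mem_range]; omega
    · intro k hk
      have hk' : k < m - 1 - (j0 : ℕ) := Finset.mem_range.mp hk
      have := j0.isLt
      refine Finset.mem_Ioi.mpr ?_
      show (j0 : ℕ) < m - 1 - k
      omega
    · intro j hj
      have hj0 : j0 < j := Finset.mem_Ioi.mp hj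
      have hj' : (j0 : ℕ) < (j : ℕ) := hj0
      have := j.isLt
      apply Fin.ext; simp; omega
    · intro k hk
      have hk' : k < m - 1 - (j0 : ℕ) := Finset.mem_range.mp hk
      have := j0.isLt
      simp; omega
    · intro j hj
      have hj0 : j0 < j := Finset.mem_Ioi.mp hj
      have hj' : (j0 : ℕ) < (j : ℕ) := hj0
      have := j.isLt
      have h1 : m - 1 - (m - 1 - (j : ℕ)) = (j : ℕ) := by omega
      have h2 : m - 1 - (m - 1 - (j : ℕ)) < m := by omega
      simp only [hg, dif_pos h2]
      congr 2
      · congr 1; apply Fin.ext; simpa using h1.symm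
  rw [key]
  exact sum_lt_pow p hp g hglt _

lemma code_lt {p m : ℕ} (hp : 1 ≤ p) (f g : Fin m → Fin p) (j0 : Fin m)
    (hagree : ∀ j, j < j0 → f j = g j) (h0 : (f j0 : ℕ) < (g j0 : ℕ)) :
    ∑ j, (f j : ℕ) * p ^ (m - 1 - (j : ℕ)) < ∑ j, (g j : ℕ) * p ^ (m - 1 - (j : ℕ)) := by
  classical
  have split : ∀ h : Fin m → Fin p, ∑ j, (h j : ℕ) * p ^ (m - 1 - (j : ℕ))
      = (∑ j ∈ Finset.Iio j0, (h j : ℕ) * p ^ (m - 1 - (j : ℕ)))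
        + (h j0 : ℕ) * p ^ (m - 1 - (j0 : ℕ))
        + ∑ j ∈ Finset.Ioi j0, (h j : ℕ) * p ^ (m - 1 - (j : ℕ)) := by
    intro h
    have e1 : ∑ j, (h j : ℕ) * p ^ (m - 1 - (j : ℕ))
        = ∑ j ∈ Finset.univ.erase j0, (h j : ℕ) * p ^ (m - 1 - (j : ℕ))
          + (h j0 : ℕ) * p ^ (m - 1 - (j0 : ℕ)) :=
      (Finset.sum_erase_add _ _ (Finset.mem_univ j0)).symm
    have he : Finset.univ.erase j0 = Finset.Ioi j0 ∪ Finset.Iio j0 := by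
      ext x
      simp only [Finset.mem_erase, Finset.mem_univ, and_true, Finset.mem_union,
        Finset.mem_Ioi, Finset.mem_Iio]
      constructor
      · intro hx; exact (Ne.lt_or_gt hx).symm
      · rintro (hx | hx)
        · exact Ne.symm (ne_of_lt hx)
        · exact ne_of_lt hx
    have e2 : ∑ j ∈ Finset.univ.erase j0, (h j : ℕ) * p ^ (m - 1 - (j : ℕ))
        = ∑ j ∈ Finset.Ioi j0, (h j : ℕ) * p ^ (m - 1 - (j : ℕ))
          + ∑ j ∈ Finset.Iio j0, (h j : ℕ) * p ^ (m - 1 - (j : ℕ)) := by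
      rw [he, Finset.sum_union (Finset.disjoint_Ioi_Iio j0)]
    omega
  rw [split f, split g]
  have hIio : ∑ j ∈ Finset.Iio j0, (f j : ℕ) * p ^ (m - 1 - (j : ℕ))
      = ∑ j ∈ Finset.Iio j0, (g j : ℕ) * p ^ (m - 1 - (j : ℕ)) := by
    refine Finset.sum_congr rfl fun j hj => ?_
    rw [hagree j (Finset.mem_Iio.mp hj)]
  rw [hIio]
  have ht := tail_lt hp f j0
  have htg : (0:ℕ) ≤ ∑ j ∈ Finset.Ioi j0, (g j : ℕ) * p ^ (m - 1 - (j : ℕ)) := Nat.zero_le _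
  have hmul : ((f j0 : ℕ) + 1) * p ^ (m - 1 - (j0 : ℕ)) ≤ (g j0 : ℕ) * p ^ (m - 1 - (j0 : ℕ)) :=
    Nat.mul_le_mul_right _ (by omega)
  have : (f j0 : ℕ) * p ^ (m - 1 - (j0 : ℕ)) + p ^ (m - 1 - (j0 : ℕ))
      = ((f j0 : ℕ) + 1) * p ^ (m - 1 - (j0 : ℕ)) := by ring
  omega

lemma code_lt_inv {p m : ℕ} (hp : 1 ≤ p) (f g : Fin m → Fin p)
    (h : ∑ j, (f j : ℕ) * p ^ (m - 1 - (j : ℕ)) < ∑ j, (g j : ℕ) * p ^ (m - 1 - (j : ℕ))) :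
    ∃ j0 : Fin m, (∀ j, j < j0 → f j = g j) ∧ (f j0 : ℕ) < (g j0 : ℕ) := by
  rcases @trichotomous_of _ _ (Pi.isTrichotomous_lex (β := fun _ : Fin m => Fin p) (· < ·) (fun a b => a < b)
      (IsWellFounded.wf)) f g with hlt | heq | hgt
  · obtain ⟨j0, h1, h2⟩ := hlt
    exact ⟨j0, fun j hj => h1 j hj, h2⟩
  · subst heq; omega
  · obtain ⟨j0, h1, h2⟩ := hgt
    have := code_lt hp g f j0 (fun j hj => (h1 j hj)) h2
    omega

lemma erase_split (n : ℕ) (u v : Fin n) (huv : u < v) (F : Fin n → ℕ) :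
    ∑ i, F i = ∑ i ∈ (Finset.univ.erase u).erase v, F i + F v + F u := by
  rw [Finset.sum_erase_add _ _ (Finset.mem_erase.mpr ⟨huv.ne', Finset.mem_univ v⟩),
    Finset.sum_erase_add _ _ (Finset.mem_univ u)]

lemma rearrange (a b X Y : ℕ) (hab : b < a) (hXY : Y < X) :
    a * Y + b * X < b * Y + a * X := by
  zify
  nlinarith

lemma step_lt (p n m : ℕ) (hp : 2 ≤ p) (B : Fin n → Fin m → Fin p) (u v : Fin n) (huv : u < v)
    (h : toLex (rowCode p n m (fun i j => B (Equiv.swap u v i) j)) < toLex (rowCode p n m B)) :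
    toLex (colCode p n m (fun i j => B (Equiv.swap u v i) j)) < toLex (colCode p n m B) := by
  obtain ⟨i0, hagree, hstrict⟩ := h
  have hi0 : i0 = u := by
    by_contra hne
    by_cases hv : i0 = v
    · have h1 : rowCode p n m B (Equiv.swap u v u) = rowCode p n m B u := by
        refine hagree u ?_
        rw [hv]; exact huv
      rw [Equiv.swap_apply_left] at h1
      have h2 : rowCode p n m B (Equiv.swap u v i0) < rowCode p n m B i0 := hstrict
      rw [hv, Equiv.swap_apply_right] at h2
      omega
    · have h2 : rowCode p n m B (Equiv.swap u v i0) < rowCode p n m B i0 := hstrict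
      rw [Equiv.swap_apply_of_ne_of_ne hne hv] at h2
      omega
  have h2 : rowCode p n m B v < rowCode p n m B u := by
    have h2' : rowCode p n m B (Equiv.swap u v i0) < rowCode p n m B i0 := hstrict
    rw [hi0, Equiv.swap_apply_left] at h2'
    exact h2'
  obtain ⟨j0, hagj, hltj⟩ := code_lt_inv (by omega) (B v) (B u) h2
  refine ⟨j0, fun j hj => ?_, ?_⟩
  · show colCode p n m (fun i j => B (Equiv.swap u v i) j) j = colCode p n m B j
    refine Finset.sum_congr rfl fun i _ => ?_
    have : B (Equiv.swap u v i) j = B i j := by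
      rcases eq_or_ne i u with rfl | hiu
      · rw [Equiv.swap_apply_left]; exact hagj j hj
      · rcases eq_or_ne i v with rfl | hiv
        · rw [Equiv.swap_apply_right]; exact (hagj j hj).symm
        · rw [Equiv.swap_apply_of_ne_of_ne hiu hiv]
    show (B (Equiv.swap u v i) j : ℕ) * p ^ (n - 1 - (i : ℕ))
      = (B i j : ℕ) * p ^ (n - 1 - (i : ℕ))
    rw [this]
  · show colCode p n m (fun i j => B (Equiv.swap u v i) j) j0 < colCode p n m B j0
    show ∑ i, (B (Equiv.swap u v i) j0 : ℕ) * p ^ (n - 1 - (i : ℕ))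
      < ∑ i, (B i j0 : ℕ) * p ^ (n - 1 - (i : ℕ))
    rw [erase_split n u v huv
      (fun i => (B (Equiv.swap u v i) j0 : ℕ) * p ^ (n - 1 - (i : ℕ))),
      erase_split n u v huv (fun i => (B i j0 : ℕ) * p ^ (n - 1 - (i : ℕ)))]
    have hs : ∑ i ∈ (Finset.univ.erase u).erase v,
          (B (Equiv.swap u v i) j0 : ℕ) * p ^ (n - 1 - (i : ℕ))
        = ∑ i ∈ (Finset.univ.erase u).erase v, (B i j0 : ℕ) * p ^ (n - 1 - (i : ℕ)) := by
      refine Finset.sum_congr rfl fun i hi => ?_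
      have h1 := Finset.mem_erase.mp hi
      have h2' := Finset.mem_erase.mp h1.2
      rw [Equiv.swap_apply_of_ne_of_ne h2'.1 h1.1]
    rw [hs, Equiv.swap_apply_left, Equiv.swap_apply_right]
    have hcu : (u : ℕ) < (v : ℕ) := huv
    have hY : p ^ (n - 1 - (v : ℕ)) < p ^ (n - 1 - (u : ℕ)) := by
      apply Nat.pow_lt_pow_right (by omega)
      have := v.isLt; omega
    have key := rearrange (B u j0 : ℕ) (B v j0 : ℕ)
      (p ^ (n - 1 - (u : ℕ))) (p ^ (n - 1 - (v : ℕ))) hltj hY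
    omega

lemma step_lt' (p n m : ℕ) (hp : 2 ≤ p) (B : Fin n → Fin m → Fin p) (u v : Fin n) (huv : u ≠ v)
    (h : toLex (rowCode p n m (fun i j => B (Equiv.swap u v i) j)) < toLex (rowCode p n m B)) :
    toLex (colCode p n m (fun i j => B (Equiv.swap u v i) j)) < toLex (colCode p n m B) := by
  rcases lt_or_gt_of_ne huv with hlt | hgt
  · exact step_lt p n m hp B u v hlt h
  · rw [Equiv.swap_comm] at h ⊢
    exact step_lt p n m hp B v u hgt h

/-- if a chain of row transpositions strictly decreases `r` at each
step, then `c` of the final matrix is lexicographically smaller than `c(A)`. -/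
theorem stmt5 (p n m s : ℕ) (hp : 2 ≤ p) (hs : 1 ≤ s)
    (A : Fin n → Fin m → Fin p)
    (B : Fin (s + 1) → Fin n → Fin m → Fin p)
    (hB0 : B 0 = A)
    (hstep : ∀ k : Fin s, ∃ u v : Fin n, u ≠ v ∧
      B k.succ = fun i j => B k.castSucc (Equiv.swap u v i) j)
    (hlt : ∀ k : Fin s,
      toLex (rowCode p n m (B k.succ)) < toLex (rowCode p n m (B k.castSucc))) :
    toLex (colCode p n m (B (Fin.last s))) < toLex (colCode p n m A) := by
  have main : ∀ t : ℕ, ∀ ht : t ≤ s, 1 ≤ t →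
      toLex (colCode p n m (B ⟨t, Nat.lt_succ_of_le ht⟩)) < toLex (colCode p n m (B 0)) := by
    intro t
    induction t with
    | zero => intro _ h; omega
    | succ t ih =>
      intro ht _
      have hks : t < s := ht
      obtain ⟨u, v, huv, hBk⟩ := hstep ⟨t, hks⟩
      have hltk := hlt ⟨t, hks⟩
      rw [hBk] at hltk
      have hstepc := step_lt' p n m hp (B (Fin.castSucc ⟨t, hks⟩)) u v huv hltk
      rw [← hBk] at hstepc
      have hsucc : Fin.succ (⟨t, hks⟩ : Fin s) = ⟨t + 1, Nat.lt_succ_of_le ht⟩ := rfl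
      rw [hsucc] at hstepc
      rcases Nat.eq_zero_or_pos t with rfl | hpos
      · have h0 : Fin.castSucc (⟨0, hks⟩ : Fin s) = (0 : Fin (s + 1)) := rfl
        rw [h0] at hstepc
        exact hstepc
      · have hcast : Fin.castSucc (⟨t, hks⟩ : Fin s) = ⟨t, Nat.lt_succ_of_le (le_of_lt hks)⟩ := rfl
        rw [hcast] at hstepc
        exact lt_trans hstepc (ih (le_of_lt hks) hpos)
  have hfin : Fin.last s = ⟨s, Nat.lt_succ_of_le le_rfl⟩ := rfl
  rw [hfin, ← hB0]
  exact main s le_rfl hs
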